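/- Let W(s) = (1−s²)²/4 and c₀ := ∫_{−1}^1 √(2W(s)) ds. Then c₀ is the minimum of the one-dimensional energies: (a) for every continuously differentiable function v : ℝ → ℝ with v(s) → 1 as s → +∞ and v(s) → −1 as s → −∞, one has ∫_ℝ ( |v′(s)|²/2 + W(v(s)) ) ds ≥ c₀; (b) the value c₀ is attained, namely there exists such an admissible v (one may take v(s) = tanh(s/√2)) with ∫_ℝ ( |v′|²/2 + W(v) ) ds = c₀. -/

import Mathlib

open Filter MeasureTheory

/-- The double-well potential `W(s) = (1 − s²)²/4`. -/
noncomputable def W (s : ℝ) : ℝ := (1 - s ^ 2) ^ 2 / 4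

/-- The surface-tension constant `c₀ = ∫_{−1}^{1} √(2W(s)) ds`. -/
noncomputable def c₀ : ℝ := ∫ s in (-1:ℝ)..1, Real.sqrt (2 * W s)

/-- The primitive `G(t) = (t - t³/3)/√2` of `√(2W)`. -/
noncomputable def G (t : ℝ) : ℝ := (t - t ^ 3 / 3) / Real.sqrt 2

lemma hG (t : ℝ) : HasDerivAt G ((1 - t ^ 2) / Real.sqrt 2) t := by
  have h : HasDerivAt (fun t : ℝ => (t - t ^ 3 / 3) / Real.sqrt 2)
      ((1 - ((3:ℕ) : ℝ) * t ^ (3 - 1) / 3) / Real.sqrt 2) t :=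
    ((hasDerivAt_id t).sub ((hasDerivAt_pow 3 t).div_const 3)).div_const _
  have h2 : (1 - ((3:ℕ) : ℝ) * t ^ (3 - 1) / 3) / Real.sqrt 2 = (1 - t ^ 2) / Real.sqrt 2 := by
    norm_num
  rw [h2] at h
  exact h

lemma c0_eq : c₀ = G 1 - G (-1) := by
  have h1 : Set.EqOn (fun s => Real.sqrt (2 * W s)) (fun s => (1 - s ^ 2) / Real.sqrt 2)
      (Set.uIcc (-1:ℝ) 1) := by
    intro s hs
    rw [Set.uIcc_of_le (by norm_num)] at hs
    have h2 : (0:ℝ) ≤ 1 - s ^ 2 := by nlinarith [hs.1, hs.2]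
    have h3 : 2 * W s = (1 - s ^ 2) ^ 2 / 2 := by unfold W; ring
    simp only [h3, Real.sqrt_div' _ (by norm_num : (0:ℝ) ≤ 2), Real.sqrt_sq h2]
  unfold c₀
  rw [intervalIntegral.integral_congr h1]
  exact intervalIntegral.integral_eq_sub_of_hasDerivAt (fun s _ => hG s)
    (Continuous.intervalIntegrable (by fun_prop) _ _)

lemma sqrt2_sq : Real.sqrt 2 ^ 2 = 2 := Real.sq_sqrt (by norm_num)
lemma sqrt2_pos : (0:ℝ) < Real.sqrt 2 := Real.sqrt_pos.2 (by norm_num)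

/-- The key lower bound on any interval. -/
lemma key (v : ℝ → ℝ) (hv : ContDiff ℝ 1 v) (a b : ℝ) (hab : a ≤ b) :
    ENNReal.ofReal (G (v b) - G (v a)) ≤
      ∫⁻ s : ℝ, ENNReal.ofReal ((deriv v s) ^ 2 / 2 + W (v s)) := by
  set e : ℝ → ℝ := fun s => (deriv v s) ^ 2 / 2 + W (v s) with he
  have hd : Continuous (deriv v) := hv.continuous_deriv le_rfl
  have hvc : Continuous v := hv.continuous
  have hce : Continuous e := by
    unfold e; unfold W; fun_prop
  have hgc : Continuous (fun s => (1 - (v s) ^ 2) / Real.sqrt 2 * deriv v s) := by fun_prop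
  have hgv : ∀ s, HasDerivAt (fun s => G (v s)) ((1 - (v s) ^ 2) / Real.sqrt 2 * deriv v s) s :=
    fun s => (hG (v s)).comp s (hv.differentiable one_ne_zero s).hasDerivAt
  have hle : ∀ s, (1 - (v s) ^ 2) / Real.sqrt 2 * deriv v s ≤ e s := by
    intro s
    have hdiv : ∀ x : ℝ, x / Real.sqrt 2 = x * Real.sqrt 2 / 2 := by
      intro x
      field_simp
      linear_combination (-x) * sqrt2_sq
    have hW : e s = (deriv v s) ^ 2 / 2 + (1 - (v s) ^ 2) ^ 2 / 4 := rfl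
    rw [hW, hdiv]
    nlinarith [sq_nonneg (deriv v s * Real.sqrt 2 - (1 - (v s) ^ 2)), sqrt2_sq]
  have hnn : ∀ s, 0 ≤ e s := by
    intro s
    have : e s = (deriv v s) ^ 2 / 2 + (1 - (v s) ^ 2) ^ 2 / 4 := rfl
    rw [this]; positivity
  calc ENNReal.ofReal (G (v b) - G (v a))
      ≤ ENNReal.ofReal (∫ s in a..b, e s) := by
        apply ENNReal.ofReal_le_ofReal
        rw [← intervalIntegral.integral_eq_sub_of_hasDerivAt (fun s _ => hgv s)
          (hgc.intervalIntegrable a b)]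
        exact intervalIntegral.integral_mono_on hab (hgc.intervalIntegrable a b)
          (hce.intervalIntegrable a b) (fun s _ => hle s)
    _ = ∫⁻ s in Set.Ioc a b, ENNReal.ofReal (e s) := by
        rw [intervalIntegral.integral_of_le hab]
        exact ofReal_integral_eq_lintegral_ofReal (hce.integrableOn_Ioc)
          (ae_of_all _ hnn)
    _ ≤ ∫⁻ s : ℝ, ENNReal.ofReal (e s) := setLIntegral_le_lintegral _ _

lemma Gcont : Continuous G := by unfold G; fun_prop

/-- Part (a): the lower bound. -/
lemma part_a (v : ℝ → ℝ) (hv : ContDiff ℝ 1 v)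
    (h1 : Tendsto v atTop (nhds 1)) (h2 : Tendsto v atBot (nhds (-1))) :
    ENNReal.ofReal c₀ ≤ ∫⁻ s : ℝ, ENNReal.ofReal ((deriv v s) ^ 2 / 2 + W (v s)) := by
  have t1 : Tendsto (fun n : ℕ => G (v (n : ℝ))) atTop (nhds (G 1)) :=
    ((Gcont.tendsto 1).comp h1).comp tendsto_natCast_atTop_atTop
  have tneg : Tendsto (fun n : ℕ => -(n : ℝ)) atTop atBot :=
    tendsto_neg_atTop_atBot.comp tendsto_natCast_atTop_atTop
  have t2 : Tendsto (fun n : ℕ => G (v (-(n : ℝ)))) atTop (nhds (G (-1))) :=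
    ((Gcont.tendsto (-1)).comp h2).comp tneg
  have t3 : Tendsto (fun n : ℕ => ENNReal.ofReal (G (v (n : ℝ)) - G (v (-(n : ℝ)))))
      atTop (nhds (ENNReal.ofReal c₀)) := by
    rw [c0_eq]
    exact (ENNReal.continuous_ofReal.tendsto _).comp (t1.sub t2)
  refine le_of_tendsto t3 (Eventually.of_forall fun n => ?_)
  exact key v hv (-(n : ℝ)) (n : ℝ) (by simp [neg_le_self_iff])

/-! ### The optimal profile `tanh(s/√2)` -/

noncomputable def T (x : ℝ) : ℝ := Real.sinh x / Real.cosh x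

lemma coshne (x : ℝ) : Real.cosh x ≠ 0 := (Real.cosh_pos x).ne'

lemma hT (x : ℝ) : HasDerivAt T (1 - T x ^ 2) x := by
  have h := (Real.hasDerivAt_sinh x).div (Real.hasDerivAt_cosh x) (coshne x)
  have h2 : (Real.cosh x * Real.cosh x - Real.sinh x * Real.sinh x) / Real.cosh x ^ 2
      = 1 - T x ^ 2 := by
    have hc := coshne x
    unfold T
    field_simp
  rw [h2] at h
  exact h

lemma contDiff_T : ContDiff ℝ 1 T :=
  Real.contDiff_sinh.div Real.contDiff_cosh coshne

lemma T_lt_one (x : ℝ) : T x < 1 := by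
  have h : Real.sinh x < Real.cosh x := by
    nlinarith [Real.cosh_sub_sinh x, Real.exp_pos (-x)]
  exact (div_lt_one (Real.cosh_pos x)).2 h

lemma neg_one_lt_T (x : ℝ) : -1 < T x := by
  have h : -Real.cosh x < Real.sinh x := by
    nlinarith [Real.sinh_add_cosh x, Real.exp_pos x]
  rw [T, lt_div_iff₀ (Real.cosh_pos x)]
  linarith

lemma T_atTop : Tendsto T atTop (nhds 1) := by
  have hEq : ∀ x : ℝ, T x = (1 - Real.exp (-(2 * x))) / (1 + Real.exp (-(2 * x))) := by
    intro x
    have h1 : Real.exp (-(2 * x)) = Real.exp (-x) * Real.exp (-x) := by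
      rw [← Real.exp_add]; ring_nf
    have h2 := Real.exp_ne_zero x
    have h4 : Real.exp x * Real.exp (-x) = 1 := by
      rw [← Real.exp_add]; simp
    have h3 : 1 + Real.exp (-x) * Real.exp (-x) ≠ 0 := by positivity
    rw [T, Real.sinh_eq, Real.cosh_eq, h1,
      div_eq_div_iff (by positivity : ((Real.exp x + Real.exp (-x)) / 2 : ℝ) ≠ 0) h3]
    linear_combination Real.exp (-x) * h4
  have hexp : Tendsto (fun x : ℝ => Real.exp (-(2 * x))) atTop (nhds 0) := by
    apply Real.tendsto_exp_atBot.comp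
    apply tendsto_neg_atTop_atBot.comp
    exact (tendsto_const_mul_atTop_of_pos (by norm_num : (0:ℝ) < 2)).2 tendsto_id
  have : Tendsto (fun x : ℝ => (1 - Real.exp (-(2 * x))) / (1 + Real.exp (-(2 * x))))
      atTop (nhds ((1 - 0) / (1 + 0))) :=
    ((tendsto_const_nhds.sub hexp)).div (tendsto_const_nhds.add hexp) (by norm_num)
  rw [show ((1:ℝ) - 0) / (1 + 0) = 1 by norm_num] at this
  exact this.congr (fun x => (hEq x).symm)

lemma T_neg (x : ℝ) : T (-x) = -T x := by
  unfold T; rw [Real.sinh_neg, Real.cosh_neg, neg_div]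

lemma T_atBot : Tendsto T atBot (nhds (-1)) := by
  have h : Tendsto (fun x : ℝ => -T (-x)) atBot (nhds (-1)) := by
    apply Tendsto.neg
    exact T_atTop.comp tendsto_neg_atBot_atTop
  refine h.congr fun x => ?_
  rw [T_neg]; ring

noncomputable def v₀ (s : ℝ) : ℝ := T (s / Real.sqrt 2)

lemma hv₀ : ContDiff ℝ 1 v₀ := contDiff_T.comp (contDiff_id.div_const _)

lemma hv₀deriv (s : ℝ) : HasDerivAt v₀ ((1 - v₀ s ^ 2) / Real.sqrt 2) s := by
  have hf : HasDerivAt (fun s : ℝ => s / Real.sqrt 2) (1 / Real.sqrt 2) s :=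
    (hasDerivAt_id s).div_const _
  have h := (hT (s / Real.sqrt 2)).comp s hf
  have h2 : (1 - T (s / Real.sqrt 2) ^ 2) * (1 / Real.sqrt 2)
      = (1 - v₀ s ^ 2) / Real.sqrt 2 := by
    rw [mul_one_div]; rfl
  rw [h2] at h
  exact h

lemma deriv_v₀ (s : ℝ) : deriv v₀ s = (1 - v₀ s ^ 2) / Real.sqrt 2 :=
  (hv₀deriv s).deriv

lemma v₀_atTop : Tendsto v₀ atTop (nhds 1) :=
  T_atTop.comp (tendsto_id.atTop_div_const sqrt2_pos)

lemma v₀_atBot : Tendsto v₀ atBot (nhds (-1)) :=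
  T_atBot.comp (tendsto_id.atBot_div_const sqrt2_pos)

lemma energy_eq (s : ℝ) :
    (deriv v₀ s) ^ 2 / 2 + W (v₀ s) = (1 - (v₀ s) ^ 2) / Real.sqrt 2 * deriv v₀ s := by
  rw [deriv_v₀]
  unfold W
  rw [div_pow, sqrt2_sq]
  have h := sqrt2_pos.ne'
  field_simp
  linear_combination (8 - 16 * v₀ s ^ 2 + 8 * v₀ s ^ 4) * sqrt2_sq

lemma G_le_G_one (t : ℝ) (h1 : -1 ≤ t) (h2 : t ≤ 1) : G t ≤ G 1 := by
  unfold G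
  rw [div_le_div_iff₀ sqrt2_pos sqrt2_pos]
  nlinarith [mul_nonneg (mul_nonneg (sq_nonneg (t - 1)) (by linarith : (0:ℝ) ≤ t + 2))
    sqrt2_pos.le]

lemma G_neg_one_le (t : ℝ) (h1 : -1 ≤ t) (h2 : t ≤ 1) : G (-1) ≤ G t := by
  unfold G
  rw [div_le_div_iff₀ sqrt2_pos sqrt2_pos]
  nlinarith [mul_nonneg (mul_nonneg (sq_nonneg (t + 1)) (by linarith : (0:ℝ) ≤ 2 - t))
    sqrt2_pos.le]

lemma part_b_upper :
    (∫⁻ s : ℝ, ENNReal.ofReal ((deriv v₀ s) ^ 2 / 2 + W (v₀ s))) ≤ ENNReal.ofReal c₀ := by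
  set e : ℝ → ℝ := fun s => (deriv v₀ s) ^ 2 / 2 + W (v₀ s) with he
  have hd : Continuous (deriv v₀) := hv₀.continuous_deriv le_rfl
  have hvc : Continuous v₀ := hv₀.continuous
  have hce : Continuous e := by unfold e; unfold W; fun_prop
  have hnn : ∀ s, 0 ≤ e s := by
    intro s
    have : e s = (deriv v₀ s) ^ 2 / 2 + (1 - (v₀ s) ^ 2) ^ 2 / 4 := rfl
    rw [this]; positivity
  have hsets : (⋃ n : ℕ, Set.Ioc (-(n:ℝ)) (n:ℝ)) = Set.univ := by
    ext x
    simp only [Set.mem_iUnion, Set.mem_Ioc, Set.mem_univ, iff_true]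
    obtain ⟨n, hn⟩ := exists_nat_gt |x|
    exact ⟨n, by cases abs_lt.1 hn with | intro h1 h2 => exact ⟨h1, h2.le⟩⟩
  have hdir : Directed (· ⊆ ·) (fun n : ℕ => Set.Ioc (-(n:ℝ)) (n:ℝ)) := by
    apply Monotone.directed_le
    intro m n hmn
    exact Set.Ioc_subset_Ioc (by simp [Nat.cast_le.2 hmn]) (Nat.cast_le.2 hmn)
  have hsplit : (∫⁻ s : ℝ, ENNReal.ofReal (e s)) =
      ⨆ n : ℕ, ∫⁻ s in Set.Ioc (-(n:ℝ)) (n:ℝ), ENNReal.ofReal (e s) := by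
    rw [← setLIntegral_univ, ← hsets, setLIntegral_iUnion_of_directed _ hdir]
  rw [hsplit]
  apply iSup_le
  intro n
  have hab : (-(n:ℝ)) ≤ (n:ℝ) := by simp [neg_le_self_iff]
  have hgv : ∀ s, HasDerivAt (fun s => G (v₀ s)) (e s) s := by
    intro s
    have h := (hG (v₀ s)).comp s (hv₀deriv s)
    have h2 : (1 - v₀ s ^ 2) / Real.sqrt 2 * ((1 - v₀ s ^ 2) / Real.sqrt 2) = e s := by
      show _ = deriv v₀ s ^ 2 / 2 + W (v₀ s)
      rw [energy_eq s, deriv_v₀]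
    rw [h2] at h
    exact h
  have hFTC : (∫ s in (-(n:ℝ))..(n:ℝ), e s) = G (v₀ (n:ℝ)) - G (v₀ (-(n:ℝ))) :=
    intervalIntegral.integral_eq_sub_of_hasDerivAt (fun s _ => hgv s)
      (hce.intervalIntegrable _ _)
  have h1 : (∫⁻ s in Set.Ioc (-(n:ℝ)) (n:ℝ), ENNReal.ofReal (e s))
      = ENNReal.ofReal (G (v₀ (n:ℝ)) - G (v₀ (-(n:ℝ)))) := by
    rw [← ofReal_integral_eq_lintegral_ofReal (hce.integrableOn_Ioc) (ae_of_all _ hnn),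
      ← intervalIntegral.integral_of_le hab, hFTC]
  rw [h1, c0_eq]
  apply ENNReal.ofReal_le_ofReal
  have b1 := G_le_G_one (v₀ (n:ℝ)) (neg_one_lt_T _).le (T_lt_one _).le
  have b2 := G_neg_one_le (v₀ (-(n:ℝ))) (neg_one_lt_T _).le (T_lt_one _).le
  linarith

/-- `c₀` is the minimum of the one-dimensional Modica–Mortola energies over `C¹`
profiles connecting `−1` to `+1`:
(a) every admissible profile has energy at least `c₀`;
(b) the value `c₀` is attained by some admissible profile. -/
theorem stmt_6 :
    (∀ v : ℝ → ℝ, ContDiff ℝ 1 v →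
      Tendsto v atTop (nhds 1) → Tendsto v atBot (nhds (-1)) →
      ENNReal.ofReal c₀ ≤ ∫⁻ s : ℝ, ENNReal.ofReal ((deriv v s) ^ 2 / 2 + W (v s)))
    ∧
    (∃ v : ℝ → ℝ, ContDiff ℝ 1 v ∧
      Tendsto v atTop (nhds 1) ∧ Tendsto v atBot (nhds (-1)) ∧
      (∫⁻ s : ℝ, ENNReal.ofReal ((deriv v s) ^ 2 / 2 + W (v s))) = ENNReal.ofReal c₀) := by
  constructor
  · exact part_a
  · exact ⟨v₀, hv₀, v₀_atTop, v₀_atBot,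
      le_antisymm part_b_upper (part_a v₀ hv₀ v₀_atTop v₀_atBot)⟩
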